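/- arXiv:1511.03133 — 5 statements merged into one kernel-verified Lean document; each statement's English description precedes it below -/
import Mathlib

section
/- Let F : ℂⁿ → ℂⁿ be a polynomial mapping. Then the union K₀(F) ∪ S_F of the set of critical values and the asymptotic set is a closed subset of ℂⁿ, and moreover K₀(F) ∪ S_F = cl(K₀(F)) ∪ S_F. -/
open Filter Topology

/-- Evaluation of a polynomial mapping `F : ℂⁿ → ℂⁿ` given by its coordinate
polynomials `P i`. -/
noncomputable def evalMap {n : ℕ} (P : Fin n → MvPolynomial (Fin n) ℂ)
    (x : Fin n → ℂ) : Fin n → ℂ :=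
  fun i => MvPolynomial.eval x (P i)

/-- The Jacobian determinant of the polynomial mapping determined by `P`. -/
noncomputable def jacDet {n : ℕ} (P : Fin n → MvPolynomial (Fin n) ℂ)
    (x : Fin n → ℂ) : ℂ :=
  Matrix.det (Matrix.of fun i j => MvPolynomial.eval x (MvPolynomial.pderiv j (P i)))

/-- The set of critical values `K₀(F)`. -/
noncomputable def K0 {n : ℕ} (P : Fin n → MvPolynomial (Fin n) ℂ) : Set (Fin n → ℂ) :=
  evalMap P '' {x | jacDet P x = 0}

/-- The asymptotic set `S_F` of a mapping `F : ℂⁿ → ℂⁿ`. -/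
def SF {n : ℕ} (F : (Fin n → ℂ) → (Fin n → ℂ)) : Set (Fin n → ℂ) :=
  {a | ∃ x : ℕ → (Fin n → ℂ), Tendsto (fun k => ‖x k‖) atTop atTop ∧
    Tendsto (fun k => F (x k)) atTop (𝓝 a)}

lemma continuous_evalMap {n : ℕ} (P : Fin n → MvPolynomial (Fin n) ℂ) :
    Continuous (evalMap P) :=
  continuous_pi fun i => MvPolynomial.continuous_eval _

lemma continuous_jacDet {n : ℕ} (P : Fin n → MvPolynomial (Fin n) ℂ) :
    Continuous (jacDet P) :=
  Continuous.matrix_det (by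
    apply continuous_matrix
    intro i j
    exact MvPolynomial.continuous_eval _)

lemma mem_SF_iff {n : ℕ} (F : (Fin n → ℂ) → (Fin n → ℂ)) (a : Fin n → ℂ) :
    a ∈ SF F ↔ ∀ m : ℕ, ∀ ε > (0 : ℝ), ∃ x : Fin n → ℂ,
      (m : ℝ) ≤ ‖x‖ ∧ dist (F x) a < ε := by
  constructor
  · rintro ⟨x, hx, hFx⟩ m ε hε
    have h1 : ∀ᶠ k in atTop, (m : ℝ) ≤ ‖x k‖ := hx.eventually_ge_atTop (m : ℝ)
    have h2 : ∀ᶠ k in atTop, dist (F (x k)) a < ε :=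
      (Metric.tendsto_nhds.mp hFx) ε hε
    obtain ⟨k, hk1, hk2⟩ := (h1.and h2).exists
    exact ⟨x k, hk1, hk2⟩
  · intro h
    have hpos : ∀ m : ℕ, (0 : ℝ) < 1 / (m + 1) := fun m => by positivity
    choose x hx1 hx2 using fun m : ℕ => h m (1 / (m + 1)) (hpos m)
    refine ⟨x, ?_, ?_⟩
    · exact tendsto_atTop_mono hx1 tendsto_natCast_atTop_atTop
    · rw [tendsto_iff_dist_tendsto_zero]
      exact squeeze_zero (fun m => dist_nonneg) (fun m => (hx2 m).le)
        tendsto_one_div_add_atTop_nhds_zero_nat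

lemma isClosed_SF {n : ℕ} (F : (Fin n → ℂ) → (Fin n → ℂ)) : IsClosed (SF F) := by
  rw [← closure_subset_iff_isClosed]
  intro a ha
  rw [mem_SF_iff]
  intro m ε hε
  obtain ⟨b, hb, hab⟩ := Metric.mem_closure_iff.mp ha (ε / 2) (by positivity)
  obtain ⟨x, hx1, hx2⟩ := (mem_SF_iff F b).mp hb m (ε / 2) (by positivity)
  refine ⟨x, hx1, ?_⟩
  calc dist (F x) a ≤ dist (F x) b + dist b a := dist_triangle _ _ _
    _ < ε / 2 + ε / 2 := by
        have := dist_comm a b ▸ hab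
        exact add_lt_add hx2 this
    _ = ε := by ring

lemma closure_K0_subset {n : ℕ} (P : Fin n → MvPolynomial (Fin n) ℂ) :
    closure (K0 P) ⊆ K0 P ∪ SF (evalMap P) := by
  intro a ha
  by_cases hS : a ∈ SF (evalMap P)
  · exact Or.inr hS
  · left
    have hS' := (mem_SF_iff (evalMap P) a).not.mp hS
    push_neg at hS'
    obtain ⟨m, ε, hε, hbig⟩ := hS'
    obtain ⟨y, hy, hya⟩ := mem_closure_iff_seq_limit.mp ha
    choose x hx0 hxF using fun k => hy k
    have hFx : Tendsto (fun k => evalMap P (x k)) atTop (𝓝 a) := by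
      simpa [funext hxF] using hya
    have hev : ∀ᶠ k in atTop, dist (evalMap P (x k)) a < ε :=
      (Metric.tendsto_nhds.mp hFx) ε hε
    obtain ⟨N, hN⟩ := eventually_atTop.mp hev
    have hnorm : ∀ k, ‖x (k + N)‖ < (m : ℝ) := by
      intro k
      by_contra hc
      push_neg at hc
      exact absurd (hN (k + N) (Nat.le_add_left N k)) (not_lt.mpr (hbig _ hc))
    have hball : ∀ k, x (k + N) ∈ Metric.closedBall (0 : Fin n → ℂ) m := by
      intro k
      simpa [Metric.mem_closedBall, dist_zero_right] using (hnorm k).le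
    obtain ⟨p, _, φ, hφ, hlim⟩ :=
      tendsto_subseq_of_bounded Metric.isBounded_closedBall hball
    have hφt : Tendsto (fun k => φ k + N) atTop atTop :=
      tendsto_atTop_mono (fun k => le_trans hφ.le_apply (Nat.le_add_right _ N)) tendsto_id
    have hFp : Tendsto (fun k => evalMap P (x (φ k + N))) atTop (𝓝 (evalMap P p)) :=
      ((continuous_evalMap P).tendsto p).comp hlim
    have hFa : Tendsto (fun k => evalMap P (x (φ k + N))) atTop (𝓝 a) :=
      hFx.comp hφt
    have hJp : Tendsto (fun k => jacDet P (x (φ k + N))) atTop (𝓝 (jacDet P p)) :=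
      ((continuous_jacDet P).tendsto p).comp hlim
    have hJ0 : jacDet P p = 0 := by
      have hx0' : ∀ k, jacDet P (x k) = 0 := hx0
      have : Tendsto (fun k => jacDet P (x (φ k + N))) atTop (𝓝 0) := by
        simp only [hx0']
        exact tendsto_const_nhds
      exact tendsto_nhds_unique hJp this
    exact ⟨p, hJ0, tendsto_nhds_unique hFp hFa⟩

/-- `K₀(F) ∪ S_F` is closed and equals `cl(K₀(F)) ∪ S_F`. -/
theorem K0_union_SF_isClosed {n : ℕ} (P : Fin n → MvPolynomial (Fin n) ℂ) :
    IsClosed (K0 P ∪ SF (evalMap P)) ∧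
      K0 P ∪ SF (evalMap P) = closure (K0 P) ∪ SF (evalMap P) := by
  have heq : K0 P ∪ SF (evalMap P) = closure (K0 P) ∪ SF (evalMap P) := by
    apply Set.Subset.antisymm
    · exact Set.union_subset_union_left _ subset_closure
    · exact Set.union_subset (closure_K0_subset P) Set.subset_union_right
  refine ⟨?_, heq⟩
  rw [heq]
  exact isClosed_closure.union (isClosed_SF _)
end

section
/- Let F : ℂ³ → ℂ³ be defined by F(x₁,x₂,x₃) = (x₁³ − x₁x₂x₃, x₂x₃, x₃x₁). Then the set K₀(F) of critical values of F equals (𝒮) ∪ (axis 0α₁) ∪ (axis 0α₂), where (𝒮) = { (α₁,α₂,α₃) : 27α₁² = 4α₂³, α₁ ≠ 0, α₂ ≠ 0, α₃ ≠ 0 }, 0α₁ = { (t,0,0) : t ∈ ℂ }, and 0α₂ = { (0,t,0) : t ∈ ℂ }. -/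
open Filter Topology

open MvPolynomial in
/-- The coordinate polynomials of `F(x₁,x₂,x₃) = (x₁³ - x₁x₂x₃, x₂x₃, x₃x₁)`. -/
noncomputable def P3 : Fin 3 → MvPolynomial (Fin 3) ℂ :=
  ![X 0 ^ 3 - X 0 * X 1 * X 2, X 1 * X 2, X 2 * X 0]

lemma jacDet_P3 (x : Fin 3 → ℂ) :
    jacDet P3 x = x 0 * x 2 * (3 * x 0 ^ 2 - x 1 * x 2) := by
  simp [jacDet, P3, Matrix.det_fin_three, MvPolynomial.pderiv_X, Pi.single_apply,
    Fin.ext_iff]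
  ring

lemma evalMap_P3 (x : Fin 3 → ℂ) :
    evalMap P3 x = ![x 0 ^ 3 - x 0 * x 1 * x 2, x 1 * x 2, x 2 * x 0] := by
  funext i
  fin_cases i <;> simp [evalMap, P3]

/-- `K₀(F) = (𝒮) ∪ 0α₁ ∪ 0α₂` for `F = (x₁³ - x₁x₂x₃, x₂x₃, x₃x₁)`,
where `(𝒮) = {27α₁² = 4α₂³, α₁ ≠ 0, α₂ ≠ 0, α₃ ≠ 0}` and `0α₁`, `0α₂` are the
first two coordinate axes. -/
theorem K0_P3 :
    K0 P3 =
      {a : Fin 3 → ℂ | 27 * a 0 ^ 2 = 4 * a 1 ^ 3 ∧ a 0 ≠ 0 ∧ a 1 ≠ 0 ∧ a 2 ≠ 0} ∪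
      {a : Fin 3 → ℂ | a 1 = 0 ∧ a 2 = 0} ∪
      {a : Fin 3 → ℂ | a 0 = 0 ∧ a 2 = 0} := by
  ext a
  constructor
  · rintro ⟨x, hx, rfl⟩
    rw [Set.mem_setOf_eq, jacDet_P3] at hx
    rw [evalMap_P3]
    by_cases h0 : x 0 = 0
    · exact Or.inr ⟨by simp [h0], by simp [h0]⟩
    by_cases h2 : x 2 = 0
    · exact Or.inl (Or.inr ⟨by simp [h2], by simp [h2]⟩)
    · have h3 : 3 * x 0 ^ 2 - x 1 * x 2 = 0 := by
        rcases mul_eq_zero.1 hx with h | h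
        · rcases mul_eq_zero.1 h with h | h
          · exact absurd h h0
          · exact absurd h h2
        · exact h
      refine Or.inl (Or.inl ⟨?_, ?_, ?_, ?_⟩)
      · simp only [Matrix.cons_val_zero, Matrix.cons_val_one, Matrix.head_cons]
        linear_combination (9 * x 0 ^ 4 - 15 * x 0 ^ 2 * (x 1 * x 2)
          + 4 * (x 1 * x 2) ^ 2) * h3
      · simp only [Matrix.cons_val_zero]
        intro h
        have hc : x 0 ^ 3 = 0 := by
          linear_combination (-1/2 : ℂ) * h + (x 0 / 2) * h3
        exact h0 (pow_eq_zero_iff (by norm_num) |>.1 hc)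
      · simp only [Matrix.cons_val_one, Matrix.head_cons, Matrix.cons_val_zero]
        intro h
        have hc : x 0 ^ 2 = 0 := by linear_combination h3 / 3 + h / 3
        exact h0 (pow_eq_zero_iff (by norm_num) |>.1 hc)
      · simp only [Matrix.cons_val_two, Matrix.tail_cons, Matrix.head_cons]
        exact mul_ne_zero h2 h0
  · rintro ((⟨h27, h0, h1, h2⟩ | ⟨h1, h2⟩) | ⟨h0, h2⟩)
    · -- (𝒮) case
      set t : ℂ := -(3 * a 0) / (2 * a 1) with ht_def
      have ht : t ≠ 0 := by
        apply div_ne_zero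
        · exact neg_ne_zero.2 (mul_ne_zero (by norm_num) h0)
        · exact mul_ne_zero (by norm_num) h1
      have h3t : 3 * t ^ 2 = a 1 := by
        rw [ht_def]
        field_simp
        linear_combination h27
      have hcube : -2 * t ^ 3 = a 0 := by
        rw [ht_def]
        field_simp
        linear_combination h27
      refine ⟨![t, a 1 * t / a 2, a 2 / t], ?_, ?_⟩
      · rw [Set.mem_setOf_eq, jacDet_P3]
        simp only [Matrix.cons_val_zero, Matrix.cons_val_one, Matrix.head_cons,
          Matrix.cons_val_two, Matrix.tail_cons]
        have hmid : a 1 * t / a 2 * (a 2 / t) = a 1 := by field_simp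
        rw [hmid, h3t]
        ring
      · rw [evalMap_P3]
        funext i
        fin_cases i
        · show t ^ 3 - t * (a 1 * t / a 2) * (a 2 / t) = a 0
          have hmid : t * (a 1 * t / a 2) * (a 2 / t) = a 1 * t := by
            field_simp
          rw [hmid]
          linear_combination t * h3t + hcube
        · show a 1 * t / a 2 * (a 2 / t) = a 1
          field_simp
        · show a 2 / t * t = a 2
          field_simp
    · -- axis 0α₁
      obtain ⟨c, hc⟩ := Complex.isAlgClosed.exists_pow_nat_eq (a 0) (n := 3) (by norm_num)
      refine ⟨![c, 0, 0], ?_, ?_⟩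
      · rw [Set.mem_setOf_eq, jacDet_P3]; simp
      · rw [evalMap_P3]
        funext i
        fin_cases i
        · show c ^ 3 - c * 0 * 0 = a 0
          simpa using hc
        · show (0 : ℂ) * 0 = a 1
          simp [h1]
        · show (0 : ℂ) * c = a 2
          simp [h2]
    · -- axis 0α₂
      refine ⟨![0, a 1, 1], ?_, ?_⟩
      · rw [Set.mem_setOf_eq, jacDet_P3]; simp
      · rw [evalMap_P3]
        funext i
        fin_cases i
        · show (0 : ℂ) ^ 3 - 0 * a 1 * 1 = a 0
          simp [h0]
        · show a 1 * 1 = a 1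
          ring
        · show (1 : ℂ) * 0 = a 2
          simp [h2]
end

section
/- Let F : ℂ³ → ℂ³ be defined by F(x₁,x₂,x₃) = (x₁³ − x₁x₂x₃, x₂x₃, x₃x₁). Then the set K₀(F) of critical values of F is not closed in ℂ³: the point (2/(3√3), 1, 0) (a point of the curve 27α₁² = 4α₂³ in the plane α₃ = 0 with α₁, α₂ ≠ 0) lies in the closure of K₀(F) but not in K₀(F). -/
open Filter Topology

/-- the point `(2/(3√3), 1, 0)` lies in the closure of `K₀(F)`
but not in `K₀(F)`; in particular `K₀(F)` is not closed. -/
theorem K0_P3_not_closed :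
    (![(2 : ℂ) / (3 * (Real.sqrt 3 : ℂ)), 1, 0]) ∈ closure (K0 P3) ∧
    (![(2 : ℂ) / (3 * (Real.sqrt 3 : ℂ)), 1, 0]) ∉ K0 P3 ∧
    ¬ IsClosed (K0 P3) := by
  set s : ℂ := (Real.sqrt 3 : ℂ) with hs
  have hs0 : s ≠ 0 := by
    simp only [hs, ne_eq, Complex.ofReal_eq_zero]
    positivity
  have hsq : s ^ 2 = 3 := by
    rw [hs, ← Complex.ofReal_pow, Real.sq_sqrt (by norm_num : (3:ℝ) ≥ 0)]
    norm_num
  set c : ℂ := -s⁻¹ with hc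
  have hmem : (![(2 : ℂ) / (3 * s), 1, 0]) ∈ closure (K0 P3) := by
    rw [mem_closure_iff_seq_limit]
    refine ⟨fun k => evalMap P3 ![c, (k : ℂ) + 1, ((k : ℂ) + 1)⁻¹], fun k => ?_, ?_⟩
    · refine ⟨_, ?_, rfl⟩
      show jacDet P3 _ = 0
      rw [jacDet_P3]
      have hk : ((k : ℂ) + 1) ≠ 0 := Nat.cast_add_one_ne_zero k
      simp only [Matrix.cons_val_zero, Matrix.cons_val_one, Matrix.head_cons,
        Matrix.cons_val_two, Matrix.tail_cons]
      have : 3 * c ^ 2 - ((k:ℂ)+1) * ((k:ℂ)+1)⁻¹ = 0 := by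
        rw [hc]
        field_simp
        linear_combination -hsq
      rw [this, mul_zero]
    · have heval : ∀ k : ℕ,
          evalMap P3 ![c, (k : ℂ) + 1, ((k : ℂ) + 1)⁻¹]
            = ![(2 : ℂ) / (3 * s), 1, ((k : ℂ) + 1)⁻¹ * c] := by
        intro k
        have hk : ((k : ℂ) + 1) ≠ 0 := Nat.cast_add_one_ne_zero k
        rw [evalMap_P3]
        funext i
        fin_cases i <;>
          simp only [Matrix.cons_val_zero, Matrix.cons_val_one, Matrix.head_cons,
            Matrix.cons_val_two, Matrix.tail_cons, Fin.isValue, Matrix.cons_val']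
        · simp only [Fin.zero_eta, Matrix.cons_val_zero]
          rw [hc]
          field_simp
          linear_combination hsq
        · exact mul_inv_cancel₀ hk
        · simp
      simp only [heval]
      have hlim : Tendsto (fun k : ℕ => ((k : ℂ) + 1)⁻¹) atTop (𝓝 0) := by
        have h1 : Tendsto (fun k : ℕ => ((k : ℝ) + 1)⁻¹) atTop (𝓝 0) :=
          tendsto_inv_atTop_zero.comp (tendsto_natCast_atTop_atTop.atTop_add tendsto_const_nhds)
        have h2 := (Complex.continuous_ofReal.tendsto 0).comp h1
        simpa [Function.comp_def, Complex.ofReal_inv] using h2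
      rw [tendsto_pi_nhds]
      intro i
      fin_cases i <;>
        simp only [Matrix.cons_val_zero, Matrix.cons_val_one, Matrix.head_cons,
          Matrix.cons_val_two, Matrix.tail_cons, Fin.isValue, Fin.mk_one, Fin.zero_eta]
      · exact tendsto_const_nhds
      · exact tendsto_const_nhds
      · simpa using hlim.mul_const c
  have hnotmem : (![(2 : ℂ) / (3 * s), 1, 0]) ∉ K0 P3 := by
    rintro ⟨x, -, hFx⟩
    rw [evalMap_P3] at hFx
    have h2 : x 2 * x 0 = 0 := by
      have := congrFun hFx 2; simpa using this
    have h1 : x 1 * x 2 = 1 := by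
      have := congrFun hFx 1; simpa using this
    have h0 : x 0 ^ 3 - x 0 * x 1 * x 2 = 2 / (3 * s) := by
      have := congrFun hFx 0; simpa using this
    have hx2 : x 2 ≠ 0 := by
      intro h; rw [h, mul_zero] at h1; exact one_ne_zero h1.symm
    have hx0 : x 0 = 0 := by
      rcases mul_eq_zero.mp h2 with h | h
      · exact absurd h hx2
      · exact h
    rw [hx0] at h0
    simp at h0
    have : (2 : ℂ) / (3 * s) ≠ 0 := by
      apply div_ne_zero (by norm_num)
      exact mul_ne_zero (by norm_num) hs0
    exact this h0.symm
  refine ⟨hmem, hnotmem, fun hcl => hnotmem ?_⟩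
  rwa [← hcl.closure_eq]
end

section
/- Let F : ℂ³ → ℂ³ be defined by F(x₁,x₂,x₃) = (x₁³ − x₁x₂x₃, x₂x₃, x₃x₁). Then the asymptotic set of F equals the union of the two hyperplanes {α₁ = 0} and {α₃ = 0}: S_F = { (α₁,α₂,α₃) ∈ ℂ³ : α₁ = 0 } ∪ { (α₁,α₂,α₃) ∈ ℂ³ : α₃ = 0 }. -/
open Filter Topology

lemma nat_norm (k : ℕ) : ‖(k:ℂ)+1‖ = (k:ℝ)+1 := by
  rw [show ((k:ℂ)+1) = ((k+1:ℕ):ℂ) by push_cast; ring, Complex.norm_natCast]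
  push_cast; ring

lemma nat_ne (k : ℕ) : ((k:ℂ)+1) ≠ 0 := Nat.cast_add_one_ne_zero k

lemma inv_tendsto : Tendsto (fun k : ℕ => ((k:ℂ)+1)⁻¹) atTop (𝓝 0) := by
  rw [tendsto_zero_iff_norm_tendsto_zero]
  have : (fun k : ℕ => ‖((k:ℂ)+1)⁻¹‖) = fun k : ℕ => 1/((k:ℝ)+1) := by
    funext k
    rw [norm_inv, nat_norm, one_div]
  rw [this]
  exact tendsto_one_div_add_atTop_nhds_zero_nat

lemma mem_SF_a0 (a : Fin 3 → ℂ) (ha : a 0 = 0) : a ∈ SF (evalMap P3) := by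
  refine ⟨fun k => ![a 2/((k:ℂ)+1), a 1/((k:ℂ)+1), (k:ℂ)+1], ?_, ?_⟩
  · apply tendsto_atTop_mono (f := fun k : ℕ => (k:ℝ)+1)
    · intro k
      calc (k:ℝ)+1 = ‖![a 2/((k:ℂ)+1), a 1/((k:ℂ)+1), (k:ℂ)+1] 2‖ := by
            show _ = ‖(k:ℂ)+1‖; rw [nat_norm]
        _ ≤ _ := norm_le_pi_norm _ 2
    · exact tendsto_atTop_add_const_right atTop 1 tendsto_natCast_atTop_atTop
  · simp only [evalMap_P3]
    rw [tendsto_pi_nhds]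
    intro i
    fin_cases i
    · show Tendsto (fun k : ℕ => (a 2/((k:ℂ)+1))^3
          - a 2/((k:ℂ)+1) * (a 1/((k:ℂ)+1)) * ((k:ℂ)+1)) atTop (𝓝 (a 0))
      rw [ha]
      have h0 : Tendsto (fun k : ℕ => a 2^3 * (((k:ℂ)+1)⁻¹)^3 - a 1*(a 2*(((k:ℂ)+1)⁻¹)))
          atTop (𝓝 0) := by
        have := ((inv_tendsto.pow 3).const_mul (a 2^3)).sub
          ((inv_tendsto.const_mul (a 2)).const_mul (a 1))
        simpa using this
      refine h0.congr fun k => ?_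
      have hk := nat_ne k
      field_simp
    · show Tendsto (fun k : ℕ => a 1/((k:ℂ)+1) * ((k:ℂ)+1)) atTop (𝓝 (a 1))
      refine tendsto_const_nhds.congr fun k => ?_
      have hk := nat_ne k
      field_simp
    · show Tendsto (fun k : ℕ => ((k:ℂ)+1) * (a 2/((k:ℂ)+1))) atTop (𝓝 (a 2))
      refine tendsto_const_nhds.congr fun k => ?_
      have hk := nat_ne k
      field_simp

lemma mem_SF_a2 (a : Fin 3 → ℂ) (ha : a 2 = 0) : a ∈ SF (evalMap P3) := by
  obtain ⟨c, hc⟩ : ∃ c : ℂ, c^3 - a 1 * c - a 0 = 0 := by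
    have h : (Polynomial.X^3 - Polynomial.C (a 1) * Polynomial.X
        - Polynomial.C (a 0) : Polynomial ℂ).degree ≠ 0 := by
      have : (Polynomial.X^3 - Polynomial.C (a 1) * Polynomial.X
          - Polynomial.C (a 0) : Polynomial ℂ).degree = 3 := by
        compute_degree!
      rw [this]; decide
    obtain ⟨c, hc⟩ := Complex.isAlgClosed.exists_root _ h
    refine ⟨c, ?_⟩
    simpa [Polynomial.IsRoot] using hc
  refine ⟨fun k => ![c, (k:ℂ)+1, a 1/((k:ℂ)+1)], ?_, ?_⟩
  · apply tendsto_atTop_mono (f := fun k : ℕ => (k:ℝ)+1)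
    · intro k
      calc (k:ℝ)+1 = ‖![c, (k:ℂ)+1, a 1/((k:ℂ)+1)] 1‖ := by
            show _ = ‖(k:ℂ)+1‖; rw [nat_norm]
        _ ≤ _ := norm_le_pi_norm _ 1
    · exact tendsto_atTop_add_const_right atTop 1 tendsto_natCast_atTop_atTop
  · simp only [evalMap_P3]
    rw [tendsto_pi_nhds]
    intro i
    fin_cases i
    · show Tendsto (fun k : ℕ => c^3 - c * ((k:ℂ)+1) * (a 1/((k:ℂ)+1))) atTop (𝓝 (a 0))
      refine tendsto_const_nhds.congr fun k => ?_
      have h1 : ((k:ℂ)+1) * (a 1/((k:ℂ)+1)) = a 1 := mul_div_cancel₀ _ (nat_ne k)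
      rw [mul_assoc, h1]
      linear_combination -hc
    · show Tendsto (fun k : ℕ => ((k:ℂ)+1) * (a 1/((k:ℂ)+1))) atTop (𝓝 (a 1))
      refine tendsto_const_nhds.congr fun k => ?_
      have hk := nat_ne k
      field_simp
    · show Tendsto (fun k : ℕ => (a 1/((k:ℂ)+1)) * c) atTop (𝓝 (a 2))
      rw [ha]
      have h0 : Tendsto (fun k : ℕ => a 1 * (((k:ℂ)+1)⁻¹) * c) atTop (𝓝 0) := by
        have := (inv_tendsto.const_mul (a 1)).mul_const c
        simpa using this
      refine h0.congr fun k => ?_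
      rw [div_eq_mul_inv]

lemma arith1 (M p q r s : ℝ) (hM : 1 ≤ M) (hpnn : 0 ≤ p) (hsnn : 0 ≤ s)
    (hqr : q*r ≤ M) (hs2 : p^2 - q*r ≤ s) (hps : p*s ≤ M) : p ≤ M + 1 := by
  by_contra hpc
  push_neg at hpc
  have hsx : (M+1)^2 - M ≤ s := by nlinarith
  have h2 : (M+1)*((M+1)^2 - M) ≤ p * s :=
    mul_le_mul hpc.le hsx (by nlinarith) (by linarith)
  nlinarith

lemma arith_key (M δ p : ℝ) (hM : 1 ≤ M) (hδ : 0 < δ) (hpnn : 0 ≤ p)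
    (hp8 : p*(8*(M+1)^3) ≤ M*δ) : p*(M+1) ≤ δ/8 := by
  have e1 : M*(8*p*(M+1)^2) ≤ p*(8*(M+1)^3) := by
    nlinarith [mul_nonneg hpnn (sq_nonneg (M+1))]
  have hMpos : (0:ℝ) < M := by linarith
  have e2 : 8*p*(M+1)^2 ≤ δ := by
    have := le_trans e1 hp8
    have h' : M*(8*p*(M+1)^2) ≤ M*δ := this
    exact le_of_mul_le_mul_left h' hMpos
  have e3 : 8*(p*(M+1)) ≤ 8*p*(M+1)^2 := by
    nlinarith [mul_nonneg hpnn (by linarith : (0:ℝ) ≤ M)]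
  linarith

lemma arith2 (M δ p q r s : ℝ) (hM : 1 ≤ M) (hδ : 0 < δ) (hδM : δ ≤ M)
    (hpnn : 0 ≤ p) (hsnn : 0 ≤ s) (hqrnn : 0 ≤ q*r)
    (hp8 : p*(8*(M+1)^3) ≤ M*δ) (hqr : q*r ≤ M) (hs1 : s ≤ p^2 + q*r)
    (hlow : δ/2 ≤ p*s) : False := by
  have hkey : p*(M+1) ≤ δ/8 := arith_key M δ p hM hδ hpnn hp8
  have hple : p ≤ 1 := by nlinarith
  have hsM : s ≤ M + 1 := by nlinarith
  have : p * s ≤ p*(M+1) := mul_le_mul_of_nonneg_left hsM hpnn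
  linarith

lemma arith3 (M δ r p : ℝ) (hM : 1 ≤ M) (hδ : 0 < δ) (hδM : δ ≤ M)
    (hrnn : 0 ≤ r) (hpnn : 0 ≤ p)
    (hr8 : r*(8*(M+1)^3) ≤ M*δ) (hpM : p ≤ M+1)
    (hlow : δ/2 ≤ r*p) : False := by
  have hkey : r*(M+1) ≤ δ/8 := arith_key M δ r hM hδ hrnn hr8
  have : r*p ≤ r*(M+1) := mul_le_mul_of_nonneg_left hpM hrnn
  linarith

lemma SF_sub (a : Fin 3 → ℂ) (h : a ∈ SF (evalMap P3)) : a 0 = 0 ∨ a 2 = 0 := by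
  by_contra hcon
  push_neg at hcon
  obtain ⟨h0, h2⟩ := hcon
  obtain ⟨x, hx, hF⟩ := h
  simp only [evalMap_P3] at hF
  rw [tendsto_pi_nhds] at hF
  have hA : Tendsto (fun k => x k 0 ^ 3 - x k 0 * x k 1 * x k 2) atTop (𝓝 (a 0)) := hF 0
  have hB : Tendsto (fun k => x k 1 * x k 2) atTop (𝓝 (a 1)) := hF 1
  have hC : Tendsto (fun k => x k 2 * x k 0) atTop (𝓝 (a 2)) := hF 2
  set M : ℝ := max (max ‖a 0‖ ‖a 1‖) ‖a 2‖ + 1 with hMdef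
  have hM1 : 1 ≤ M := by
    have : (0:ℝ) ≤ max (max ‖a 0‖ ‖a 1‖) ‖a 2‖ := le_max_iff.2 (Or.inr (norm_nonneg _))
    linarith
  have hm0 : ‖a 0‖ ≤ M - 1 := by
    have := le_max_left (max ‖a 0‖ ‖a 1‖) ‖a 2‖
    have := le_max_left ‖a 0‖ ‖a 1‖
    simp only [hMdef]; linarith
  have hm1 : ‖a 1‖ ≤ M - 1 := by
    have := le_max_left (max ‖a 0‖ ‖a 1‖) ‖a 2‖
    have := le_max_right ‖a 0‖ ‖a 1‖
    simp only [hMdef]; linarith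
  have hm2 : ‖a 2‖ ≤ M - 1 := by
    have := le_max_right (max ‖a 0‖ ‖a 1‖) ‖a 2‖
    simp only [hMdef]; linarith
  set δ : ℝ := min ‖a 0‖ ‖a 2‖ with hδdef
  have hδ : 0 < δ := lt_min (norm_pos_iff.2 h0) (norm_pos_iff.2 h2)
  have hδ0 : δ ≤ ‖a 0‖ := min_le_left _ _
  have hδ2 : δ ≤ ‖a 2‖ := min_le_right _ _
  have hδM : δ ≤ M - 1 := le_trans hδ0 hm0
  set ε : ℝ := min (δ/2) 1 with hεdef
  have hε : 0 < ε := lt_min (by linarith) one_pos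
  have hε1 : ε ≤ 1 := min_le_right _ _
  have hεδ : ε ≤ δ/2 := min_le_left _ _
  set N : ℝ := 8*(M+1)^3/δ + M + 2 with hNdef
  have hN8 : 8*(M+1)^3 ≤ N*δ := by
    rw [hNdef, add_mul, add_mul, div_mul_cancel₀ _ (ne_of_gt hδ)]
    nlinarith
  have hNM : M + 2 ≤ N := by
    have : (0:ℝ) ≤ 8*(M+1)^3/δ := by positivity
    rw [hNdef]; linarith
  have hEA := hA.eventually_mem (Metric.ball_mem_nhds (a 0) hε)
  have hEB := hB.eventually_mem (Metric.ball_mem_nhds (a 1) hε)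
  have hEC := hC.eventually_mem (Metric.ball_mem_nhds (a 2) hε)
  have hEN := hx.eventually_ge_atTop N
  obtain ⟨k, ⟨⟨hkA, hkB⟩, hkC⟩, hkN⟩ := (((hEA.and hEB).and hEC).and hEN).exists
  set u := x k 0 with hu
  set v := x k 1 with hv
  set w := x k 2 with hw
  set p := ‖u‖ with hp
  set q := ‖v‖ with hq
  set r := ‖w‖ with hr
  have hpnn : 0 ≤ p := norm_nonneg _
  have hqnn : 0 ≤ q := norm_nonneg _
  have hrnn : 0 ≤ r := norm_nonneg _
  -- distance facts
  have hdA : ‖(u^3 - u*v*w) - a 0‖ < ε := by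
    rw [← dist_eq_norm]; exact Metric.mem_ball.mp hkA
  have hdB : ‖(v*w) - a 1‖ < ε := by
    rw [← dist_eq_norm]; exact Metric.mem_ball.mp hkB
  have hdC : ‖(w*u) - a 2‖ < ε := by
    rw [← dist_eq_norm]; exact Metric.mem_ball.mp hkC
  have htriA := abs_norm_sub_norm_le (u^3 - u*v*w) (a 0)
  have htriB := abs_norm_sub_norm_le (v*w) (a 1)
  have htriC := abs_norm_sub_norm_le (w*u) (a 2)
  rw [abs_le] at htriA htriB htriC
  -- norm bounds
  have hnaM : ‖u^3 - u*v*w‖ ≤ M := by linarith [htriA.2]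
  have hnaδ : δ/2 ≤ ‖u^3 - u*v*w‖ := by linarith [htriA.1]
  have hnbM : q*r ≤ M := by
    have : ‖v*w‖ = q*r := norm_mul _ _
    linarith [htriB.2, this.symm.le, this.le]
  have hncM : r*p ≤ M := by
    have : ‖w*u‖ = r*p := norm_mul _ _
    linarith [htriC.2, this.symm.le, this.le]
  have hncδ : δ/2 ≤ r*p := by
    have : ‖w*u‖ = r*p := norm_mul _ _
    linarith [htriC.1, this.symm.le, this.le]
  -- factorization
  set s := ‖u^2 - v*w‖ with hs
  have hsnn : 0 ≤ s := norm_nonneg _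
  have hAeq : ‖u^3 - u*v*w‖ = p * s := by
    rw [show u^3 - u*v*w = u * (u^2 - v*w) by ring, norm_mul]
  have hs1 : s ≤ p^2 + q*r := by
    calc s ≤ ‖u^2‖ + ‖v*w‖ := norm_sub_le _ _
      _ = p^2 + q*r := by rw [norm_pow, norm_mul]
  have hs2 : p^2 - q*r ≤ s := by
    have h' := norm_sub_norm_le (u^2) (v*w)
    rw [norm_pow, norm_mul] at h'
    linarith
  -- p is bounded
  have hpM : p ≤ M + 1 :=
    arith1 M p q r s hM1 hpnn hsnn hnbM hs2 (hAeq ▸ hnaM)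
  -- some coordinate is big
  have hmax : N ≤ max p (max q r) := by
    by_contra hm
    push_neg at hm
    have : ‖x k‖ ≤ max p (max q r) := by
      apply pi_norm_le_iff_of_nonneg (le_trans hpnn (le_max_left _ _)) |>.2
      intro i
      fin_cases i
      · exact le_max_left _ _
      · exact le_trans (le_max_left q r) (le_max_right _ _)
      · exact le_trans (le_max_right q r) (le_max_right _ _)
    linarith
  rcases le_max_iff.mp hmax with hbig | hbig'
  · -- p large : impossible since p ≤ M+1 < M+2 ≤ N
    linarith
  rcases le_max_iff.mp hbig' with hbig | hbig
  · -- q ≥ N : r*(M+1) small, contradict r*p ≥ δ/2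
    have hq0 : 0 < q := by linarith
    have hrN : r*N ≤ M := by
      calc r*N ≤ r*q := mul_le_mul_of_nonneg_left hbig hrnn
        _ = q*r := mul_comm _ _
        _ ≤ M := hnbM
    have hr8 : r*(8*(M+1)^3) ≤ M*δ := by
      calc r*(8*(M+1)^3) ≤ r*(N*δ) := mul_le_mul_of_nonneg_left hN8 hrnn
        _ = (r*N)*δ := by ring
        _ ≤ M*δ := mul_le_mul_of_nonneg_right hrN hδ.le
    exact arith3 M δ r p hM1 hδ (by linarith) hrnn hpnn hr8 hpM hncδ
  · -- r ≥ N : p tiny, contradict ‖A‖ ≥ δ/2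
    have hpN : p*N ≤ M := by
      calc p*N ≤ p*r := mul_le_mul_of_nonneg_left hbig hpnn
        _ = r*p := mul_comm _ _
        _ ≤ M := hncM
    have hp8 : p*(8*(M+1)^3) ≤ M*δ := by
      calc p*(8*(M+1)^3) ≤ p*(N*δ) := mul_le_mul_of_nonneg_left hN8 hpnn
        _ = (p*N)*δ := by ring
        _ ≤ M*δ := mul_le_mul_of_nonneg_right hpN hδ.le
    exact arith2 M δ p q r s hM1 hδ (by linarith) hpnn hsnn
      (mul_nonneg hqnn hrnn) hp8 hnbM hs1 (hAeq ▸ hnaδ)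

/-- the asymptotic set of `F = (x₁³ - x₁x₂x₃, x₂x₃, x₃x₁)` is the
union of the hyperplanes `{α₁ = 0}` and `{α₃ = 0}`. -/
theorem SF_P3 :
    SF (evalMap P3) = {a : Fin 3 → ℂ | a 0 = 0} ∪ {a : Fin 3 → ℂ | a 2 = 0} := by
  ext a
  simp only [Set.mem_union, Set.mem_setOf_eq]
  constructor
  · exact SF_sub a
  · rintro (h | h)
    · exact mem_SF_a0 a h
    · exact mem_SF_a2 a h
end

section
/- Let F : ℂⁿ → ℂⁿ be a polynomial mapping each of whose leading forms F̂ᵢ has positive degree, and suppose X ⊆ ℂⁿ ≅ ℝ²ⁿ is an unbounded set such that F(X) is bounded. Then the common zero set V of the leading forms F̂₁,…,F̂ₙ (as real polynomial maps ℝ²ⁿ → ℝ²) satisfies V ∩ S²ⁿ⁻¹(0,1) ≠ ∅. -/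
open Filter Topology

/-- The leading form (homogeneous component of highest degree) of a polynomial. -/
noncomputable def leadingForm {ι : Type} [Fintype ι] {R : Type*} [CommSemiring R]
    (p : MvPolynomial ι R) : MvPolynomial ι R :=
  MvPolynomial.homogeneousComponent p.totalDegree p

/-- The Euclidean norm of `x ∈ ℂⁿ ≅ ℝ²ⁿ`. -/
noncomputable def cEucNorm {n : ℕ} (x : Fin n → ℂ) : ℝ :=
  Real.sqrt (∑ i, ‖x i‖ ^ 2)

lemma eval_smul_isHomogeneous {n d : ℕ} {φ : MvPolynomial (Fin n) ℂ}
    (hφ : φ.IsHomogeneous d) (c : ℂ) (x : Fin n → ℂ) :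
    MvPolynomial.eval (c • x) φ = c ^ d * MvPolynomial.eval x φ := by
  rw [MvPolynomial.eval_eq', MvPolynomial.eval_eq', Finset.mul_sum]
  refine Finset.sum_congr rfl fun m hm => ?_
  have hd : ∑ i, m i = d := by
    have h := hφ (MvPolynomial.mem_support_iff.mp hm)
    rw [Pi.one_def, ← Finsupp.degree_eq_weight_one] at h
    rw [← h, Finsupp.degree]
    exact (Finset.sum_subset (Finset.subset_univ _)
      (fun i _ hi => Finsupp.notMem_support_iff.mp hi)).symm
  simp only [Pi.smul_apply, smul_eq_mul, mul_pow]
  rw [Finset.prod_mul_distrib, Finset.prod_pow_eq_pow_sum, hd]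
  ring

lemma continuous_cEucNorm {n : ℕ} : Continuous (cEucNorm (n := n)) :=
  Real.continuous_sqrt.comp (continuous_finset_sum _ fun i _ =>
    (continuous_norm.comp (continuous_apply i)).pow 2)

lemma norm_le_cEucNorm {n : ℕ} (x : Fin n → ℂ) : ‖x‖ ≤ cEucNorm x := by
  unfold cEucNorm
  rw [pi_norm_le_iff_of_nonneg (Real.sqrt_nonneg _)]
  intro i
  rw [← Real.sqrt_sq (norm_nonneg (x i))]
  exact Real.sqrt_le_sqrt (Finset.single_le_sum (f := fun j => ‖x j‖ ^ 2)
    (fun j _ => sq_nonneg _) (Finset.mem_univ i))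

lemma cEucNorm_csmul {n : ℕ} (c : ℂ) (x : Fin n → ℂ) :
    cEucNorm (c • x) = ‖c‖ * cEucNorm x := by
  unfold cEucNorm
  have : ∀ i, ‖(c • x) i‖ ^ 2 = ‖c‖ ^ 2 * ‖x i‖ ^ 2 := by
    intro i
    simp [Pi.smul_apply, smul_eq_mul, map_mul, mul_pow]
  simp_rw [this, ← Finset.mul_sum]
  rw [Real.sqrt_mul (sq_nonneg _), Real.sqrt_sq (norm_nonneg c)]


/-- if the leading forms of `F` have positive degree, `X ⊆ ℂⁿ` is
unbounded and `F(X)` is bounded, then the common zero set `V` of the leading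
forms meets the unit sphere `S²ⁿ⁻¹(0,1)`. -/
theorem leading_zero_meets_sphere {n : ℕ} (P : Fin n → MvPolynomial (Fin n) ℂ)
    (hdeg : ∀ i, 0 < (P i).totalDegree) (X : Set (Fin n → ℂ))
    (hub : ¬ Bornology.IsBounded X)
    (hb : Bornology.IsBounded (evalMap P '' X)) :
    ∃ x : Fin n → ℂ,
      (∀ i, MvPolynomial.eval x (leadingForm (P i)) = 0) ∧ cEucNorm x = 1 := by
  have hseq : ∀ k : ℕ, ∃ x ∈ X, (k : ℝ) < ‖x‖ := by
    intro k
    by_contra h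
    push_neg at h
    exact hub (isBounded_iff_forall_norm_le.mpr ⟨k, h⟩)
  choose x hxX hxk using hseq
  set t : ℕ → ℝ := fun k => cEucNorm (x k) with ht
  have htk : ∀ k : ℕ, (k : ℝ) < t k := fun k => lt_of_lt_of_le (hxk k) (norm_le_cEucNorm _)
  have htpos : ∀ k, 0 < t k := fun k => lt_of_le_of_lt (Nat.cast_nonneg k) (htk k)
  have htne : ∀ k, ((t k : ℂ)) ≠ 0 := fun k => Complex.ofReal_ne_zero.mpr (htpos k).ne'
  set u : ℕ → (Fin n → ℂ) := fun k => ((t k : ℂ))⁻¹ • x k with hu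
  have huS : ∀ k, cEucNorm (u k) = 1 := by
    intro k
    rw [hu]
    simp only
    rw [cEucNorm_csmul, norm_inv, Complex.norm_real, Real.norm_eq_abs, abs_of_pos (htpos k)]
    exact inv_mul_cancel₀ (htpos k).ne'
  have hxu : ∀ k, x k = (t k : ℂ) • u k := by
    intro k
    rw [hu]
    simp only
    rw [smul_smul, mul_inv_cancel₀ (htne k), one_smul]
  have hScpt : IsCompact {v : Fin n → ℂ | cEucNorm v = 1} := by
    apply Metric.isCompact_of_isClosed_isBounded
    · exact isClosed_eq continuous_cEucNorm continuous_const
    · refine isBounded_iff_forall_norm_le.mpr ⟨1, fun v hv => ?_⟩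
      exact le_trans (norm_le_cEucNorm v) (le_of_eq hv)
  obtain ⟨a, haS, φ, hφmono, hφtend⟩ := hScpt.tendsto_subseq huS
  refine ⟨a, fun i => ?_, haS⟩
  set p := P i with hp
  set d := p.totalDegree with hd
  have hd1 : 0 < d := hdeg i
  -- bound on F(X)
  obtain ⟨B, hB⟩ := isBounded_iff_forall_norm_le.mp hb
  have hBnn : 0 ≤ B := le_trans (norm_nonneg _) (hB _ ⟨x 0, hxX 0, rfl⟩)
  have hBx : ∀ k, ‖MvPolynomial.eval (x k) p‖ ≤ B := fun k =>
    le_trans (norm_le_pi_norm (evalMap P (x k)) i) (hB _ ⟨x k, hxX k, rfl⟩)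
  -- bound on the sphere
  set g : (Fin n → ℂ) → ℝ := fun v =>
    ∑ j ∈ Finset.range d, ‖MvPolynomial.eval v (MvPolynomial.homogeneousComponent j p)‖ with hg
  have hgcont : Continuous g :=
    continuous_finset_sum _ fun j _ => (MvPolynomial.continuous_eval _).norm
  obtain ⟨v₀, hv₀S, hv₀⟩ := hScpt.exists_isMaxOn ⟨a, haS⟩ hgcont.continuousOn
  set M := g v₀ with hM
  have hMnn : 0 ≤ M := Finset.sum_nonneg fun j _ => norm_nonneg _
  have hgM : ∀ k, g (u k) ≤ M := fun k => hv₀ (huS k)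
  -- key identity
  have key : ∀ k, (t k : ℂ) ^ d * MvPolynomial.eval (u k) (leadingForm p)
      = MvPolynomial.eval (x k) p - ∑ j ∈ Finset.range d,
          (t k : ℂ) ^ j * MvPolynomial.eval (u k) (MvPolynomial.homogeneousComponent j p) := by
    intro k
    have h1 : MvPolynomial.eval (x k) p
        = (∑ j ∈ Finset.range d,
            (t k : ℂ) ^ j * MvPolynomial.eval (u k) (MvPolynomial.homogeneousComponent j p))
          + (t k : ℂ) ^ d * MvPolynomial.eval (u k) (leadingForm p) := by
      conv_lhs => rw [hxu k, ← MvPolynomial.sum_homogeneousComponent p]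
      rw [map_sum, Finset.sum_range_succ]
      congr 1
      · exact Finset.sum_congr rfl fun j _ =>
          eval_smul_isHomogeneous (MvPolynomial.homogeneousComponent_isHomogeneous j p) _ _
      · exact eval_smul_isHomogeneous (MvPolynomial.homogeneousComponent_isHomogeneous d p) _ _
    rw [h1]; ring
  -- norm bound
  have hbound : ∀ k : ℕ, 1 ≤ k →
      ‖MvPolynomial.eval (u k) (leadingForm p)‖ ≤ (B + M) / k := by
    intro k hk
    have ht1 : (1 : ℝ) ≤ t k := le_trans (by exact_mod_cast hk) (htk k).le
    have hp1 : (1 : ℝ) ≤ t k ^ (d - 1) := one_le_pow₀ ht1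
    set L := MvPolynomial.eval (u k) (leadingForm p) with hL
    have habs : t k ^ d * ‖L‖ ≤ B + t k ^ (d - 1) * M := by
      have h0 : ‖(t k : ℂ) ^ d * L‖ = t k ^ d * ‖L‖ := by
        rw [norm_mul, norm_pow, Complex.norm_real, Real.norm_eq_abs, abs_of_pos (htpos k)]
      calc t k ^ d * ‖L‖ = ‖(t k : ℂ) ^ d * L‖ := h0.symm
        _ = ‖MvPolynomial.eval (x k) p - ∑ j ∈ Finset.range d,
              (t k : ℂ) ^ j * MvPolynomial.eval (u k)
                (MvPolynomial.homogeneousComponent j p)‖ := by rw [key k]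
        _ ≤ ‖MvPolynomial.eval (x k) p‖ + ‖∑ j ∈ Finset.range d,
              (t k : ℂ) ^ j * MvPolynomial.eval (u k)
                (MvPolynomial.homogeneousComponent j p)‖ := norm_sub_le _ _
        _ ≤ B + t k ^ (d - 1) * M := by
            refine add_le_add (hBx k) ?_
            calc ‖∑ j ∈ Finset.range d, (t k : ℂ) ^ j * MvPolynomial.eval (u k)
                  (MvPolynomial.homogeneousComponent j p)‖
                ≤ ∑ j ∈ Finset.range d, ‖(t k : ℂ) ^ j * MvPolynomial.eval (u k)
                  (MvPolynomial.homogeneousComponent j p)‖ := norm_sum_le _ _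
              _ ≤ ∑ j ∈ Finset.range d, t k ^ (d - 1) * ‖MvPolynomial.eval (u k)
                  (MvPolynomial.homogeneousComponent j p)‖ := by
                  refine Finset.sum_le_sum fun j hj => ?_
                  rw [norm_mul, norm_pow, Complex.norm_real, Real.norm_eq_abs,
                    abs_of_pos (htpos k)]
                  refine mul_le_mul_of_nonneg_right ?_ (norm_nonneg _)
                  exact pow_le_pow_right₀ ht1 (by
                    have := Finset.mem_range.mp hj; omega)
              _ = t k ^ (d - 1) * g (u k) := by rw [Finset.mul_sum]
              _ ≤ t k ^ (d - 1) * M := by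
                  exact mul_le_mul_of_nonneg_left (hgM k) (by positivity)
    have hpow : t k ^ d = t k ^ (d - 1) * t k := by
      rw [← pow_succ]; congr 1; omega
    have h3 : t k * ‖L‖ ≤ B + M := by
      have h2 : t k ^ (d - 1) * (t k * ‖L‖) ≤ t k ^ (d - 1) * (B + M) := by
        calc t k ^ (d - 1) * (t k * ‖L‖) = t k ^ d * ‖L‖ := by rw [hpow]; ring
          _ ≤ B + t k ^ (d - 1) * M := habs
          _ ≤ t k ^ (d - 1) * B + t k ^ (d - 1) * M := by nlinarith
          _ = t k ^ (d - 1) * (B + M) := by ring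
      exact le_of_mul_le_mul_left h2 (by positivity)
    have hkpos : (0 : ℝ) < k := by exact_mod_cast hk
    have hLle : ‖L‖ ≤ (B + M) / t k := by
      rw [le_div_iff₀ (htpos k), mul_comm]
      exact h3
    refine le_trans hLle ?_
    apply div_le_div_of_nonneg_left _ hkpos (htk k).le
    linarith [hBnn, hMnn]
  -- limit along the sequence
  have hL0 : Tendsto (fun k => MvPolynomial.eval (u k) (leadingForm p)) atTop (𝓝 0) := by
    refine squeeze_zero_norm' (a := fun k : ℕ => (B + M) / k)
      ?_ (tendsto_const_div_atTop_nhds_zero_nat (B + M))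
    filter_upwards [eventually_ge_atTop 1] with k hk using hbound k hk
  have hsub : Tendsto (fun k => MvPolynomial.eval (u (φ k)) (leadingForm p)) atTop (𝓝 0) :=
    hL0.comp hφmono.tendsto_atTop
  have hlim : Tendsto (fun k => MvPolynomial.eval ((u ∘ φ) k) (leadingForm p)) atTop
      (𝓝 (MvPolynomial.eval a (leadingForm p))) :=
    ((MvPolynomial.continuous_eval _).tendsto a).comp hφtend
  exact tendsto_nhds_unique hlim hsub
end
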